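/- Let Φ : X × Y → ℝ ∪ {±∞} be proper with v := inf_x Φ(x,0) ∈ ℝ and with pr_{Y×ℝ}(epi Φ) convex. If 0 ∈ qi(pr_Y(dom Φ)) and (0,0) ∉ qri(co(pr_{Y×ℝ}(epi(Φ - v)) ∪ {(0,0)})), then inf_{x∈X} Φ(x,0) = max_{y* ∈ Y*} (−Φ*(0, y*)), i.e., strong duality holds with dual attainment. -/

import Mathlib

open Set Pointwise Topology

/-- The conic hull: cone(S) = ⋃_{t ≥ 0} t • S. -/
def coneHull {E : Type*} [AddCommGroup E] [Module ℝ E] (S : Set E) : Set E :=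
  {x | ∃ t : ℝ, 0 ≤ t ∧ ∃ s ∈ S, x = t • s}

/-- The quasi-relative interior. -/
def qri {E : Type*} [AddCommGroup E] [Module ℝ E] [TopologicalSpace E] (U : Set E) : Set E :=
  {x | x ∈ U ∧ ∃ M : Submodule ℝ E, closure (coneHull (U - {x})) = (M : Set E)}

/-- The quasi interior. -/
def qi {E : Type*} [AddCommGroup E] [Module ℝ E] [TopologicalSpace E] (U : Set E) : Set E :=
  {x | x ∈ U ∧ closure (coneHull (U - {x})) = Set.univ}

/-- The algebraic interior (core). -/
def algCore {E : Type*} [AddCommGroup E] [Module ℝ E] (U : Set E) : Set E :=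
  {x | x ∈ U ∧ coneHull (U - {x}) = Set.univ}

/-- The relative algebraic interior (intrinsic core). -/
def icr {E : Type*} [AddCommGroup E] [Module ℝ E] (U : Set E) : Set E :=
  {x | x ∈ U ∧ ∃ M : Submodule ℝ E, coneHull (U - {x}) = (M : Set E)}

/-- The strong quasi-relative interior. -/
def sqri {E : Type*} [AddCommGroup E] [Module ℝ E] [TopologicalSpace E] (U : Set E) : Set E :=
  {x | x ∈ U ∧ ∃ M : Submodule ℝ E, coneHull (U - {x}) = (M : Set E) ∧ IsClosed (M : Set E)}

/-- The normal cone of U at x. -/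
def normalCone {E : Type*} [AddCommGroup E] [Module ℝ E] [TopologicalSpace E]
    (U : Set E) (x : E) : Set (E →L[ℝ] ℝ) :=
  {f | ∀ y ∈ U, f (y - x) ≤ 0}

section Aux
variable {E : Type*} [AddCommGroup E] [Module ℝ E]

lemma mem_coneHull_of_mem {S : Set E} {x : E} (hx : x ∈ S) : x ∈ coneHull S :=
  ⟨1, zero_le_one, x, hx, (one_smul ℝ x).symm⟩

lemma coneHull_combo {S : Set E} (hS : Convex ℝ S) {a b : ℝ} (ha : 0 ≤ a) (hb : 0 ≤ b)
    {u w : E} (hu : u ∈ S) (hw : w ∈ S) : a • u + b • w ∈ coneHull S := by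
  rcases eq_or_lt_of_le (add_nonneg ha hb) with h | h
  · have ha0 : a = 0 := by linarith
    have hb0 : b = 0 := by linarith
    exact ⟨0, le_refl 0, u, hu, by simp [ha0, hb0]⟩
  · have hne : a + b ≠ 0 := h.ne'
    refine ⟨a + b, h.le, (a / (a + b)) • u + (b / (a + b)) • w,
      hS hu hw (by positivity) (by positivity) (by field_simp), ?_⟩
    rw [smul_add, smul_smul, smul_smul]
    congr 1 <;> rw [mul_div_cancel₀ _ hne]

lemma coneHull_smul_mem {S : Set E} {t : ℝ} (ht : 0 ≤ t) {x : E} (hx : x ∈ coneHull S) :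
    t • x ∈ coneHull S := by
  obtain ⟨s, hs, y, hy, rfl⟩ := hx
  exact ⟨t * s, mul_nonneg ht hs, y, hy, smul_smul t s y⟩

lemma coneHull_convex {S : Set E} (hS : Convex ℝ S) : Convex ℝ (coneHull S) := by
  intro x hx y hy a b ha hb _
  obtain ⟨t, ht, u, hu, rfl⟩ := hx
  obtain ⟨s, hs, w, hw, rfl⟩ := hy
  rw [smul_smul, smul_smul]
  exact coneHull_combo hS (mul_nonneg ha ht) (mul_nonneg hb hs) hu hw

lemma coneHull_add_mem {S : Set E} (hS : Convex ℝ S) {x y : E}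
    (hx : x ∈ coneHull S) (hy : y ∈ coneHull S) : x + y ∈ coneHull S := by
  obtain ⟨t, ht, u, hu, rfl⟩ := hx
  obtain ⟨s, hs, w, hw, rfl⟩ := hy
  exact coneHull_combo hS ht hs hu hw

end Aux

lemma ereal_neg_iInf {ι : Sort*} (f : ι → EReal) : -(⨅ i, f i) = ⨆ i, -f i := by
  have hmono : ∀ a b : EReal, a ≤ b → -b ≤ -a := fun a b h =>
    EReal.neg_le.mpr (by simpa using h)
  refine le_antisymm ?_ (iSup_le fun i => hmono _ _ (iInf_le f i))
  rw [EReal.neg_le]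
  refine le_iInf fun i => ?_
  have := hmono _ _ (le_iSup (fun i => -f i) i)
  simpa using this

theorem strong_duality_of_qi_qri
    {X Y : Type*}
    [AddCommGroup X] [Module ℝ X] [TopologicalSpace X] [IsTopologicalAddGroup X]
    [ContinuousSMul ℝ X] [LocallyConvexSpace ℝ X] [T2Space X]
    [AddCommGroup Y] [Module ℝ Y] [TopologicalSpace Y] [IsTopologicalAddGroup Y]
    [ContinuousSMul ℝ Y] [LocallyConvexSpace ℝ Y] [T2Space Y]
    (Φ : X × Y → EReal)
    (hbot : ∀ p, Φ p ≠ ⊥) (hdom : ∃ p, Φ p ≠ ⊤)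
    (v : ℝ) (hv : (⨅ x : X, Φ (x, 0)) = (v : EReal))
    (hconv : Convex ℝ {p : Y × ℝ | ∃ x : X, Φ (x, p.1) ≤ (p.2 : EReal)})
    (hqi : (0 : Y) ∈ qi {y : Y | ∃ x : X, Φ (x, y) ≠ ⊤})
    (hqri : ((0 : Y), (0 : ℝ)) ∉ qri (convexHull ℝ
      ({p : Y × ℝ | ∃ x : X, Φ (x, p.1) ≤ ((p.2 + v : ℝ) : EReal)} ∪ {(0, 0)}))) :
    ∃ ystar : Y →L[ℝ] ℝ,
      (-(⨆ p : X × Y, ((ystar p.2 : ℝ) : EReal) - Φ p) = (v : EReal)) ∧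
      ∀ zstar : Y →L[ℝ] ℝ,
        -(⨆ p : X × Y, ((zstar p.2 : ℝ) : EReal) - Φ p) ≤ (v : EReal) := by
  classical
  set A : Set (Y × ℝ) := {p : Y × ℝ | ∃ x : X, Φ (x, p.1) ≤ ((p.2 + v : ℝ) : EReal)} with hA
  set U : Set (Y × ℝ) := convexHull ℝ (A ∪ {(0, 0)}) with hU
  have hUconv : Convex ℝ U := convex_convexHull ℝ _
  have h00U : ((0 : Y), (0 : ℝ)) ∈ U := subset_convexHull ℝ _ (Or.inr rfl)
  have h0eq : ((0 : Y), (0 : ℝ)) = (0 : Y × ℝ) := rfl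
  have h0C : (0 : Y × ℝ) ∈ coneHull U := mem_coneHull_of_mem (h0eq ▸ h00U)
  have hCb_smul : ∀ (t : ℝ), 0 ≤ t → ∀ w ∈ closure (coneHull U), t • w ∈ closure (coneHull U) :=
    fun t ht w hw =>
      map_mem_closure (continuous_const_smul t) hw (fun _ hx => coneHull_smul_mem ht hx)
  have hCb_add : ∀ w₁ ∈ closure (coneHull U), ∀ w₂ ∈ closure (coneHull U),
      w₁ + w₂ ∈ closure (coneHull U) :=
    fun _ h1 _ h2 =>
      map_mem_closure₂ continuous_add h1 h2 (fun _ ha _ hb => coneHull_add_mem hUconv ha hb)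
  have hUsub : U - {((0 : Y), (0 : ℝ))} = U := by
    rw [h0eq]
    simp [Set.sub_singleton]
  -- Step 1: there is z ∈ closure (coneHull U) with -z ∉ closure (coneHull U)
  have hstep1 : ∃ z ∈ closure (coneHull U), -z ∉ closure (coneHull U) := by
    by_contra hcon
    push_neg at hcon
    apply hqri
    refine ⟨h00U, ⟨{
      carrier := closure (coneHull U)
      add_mem' := fun ha hb => hCb_add _ ha _ hb
      zero_mem' := subset_closure h0C
      smul_mem' := by
        intro c x hx
        rcases le_or_gt 0 c with hc | hc
        · exact hCb_smul c hc x hx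
        · have hcx : c • x = (-c) • (-x) := (neg_smul_neg c x).symm
          rw [hcx]
          exact hCb_smul (-c) (by linarith) (-x) (hcon x hx) }, ?_⟩⟩
    rw [hUsub]
    rfl
  obtain ⟨z, hz, hnz⟩ := hstep1
  -- Step 2: separate -z from the closed convex cone
  obtain ⟨f, u, hfu, hux⟩ := geometric_hahn_banach_closed_point
    (coneHull_convex hUconv).closure isClosed_closure hnz
  have hupos : (0 : ℝ) < u := by
    have := hfu 0 (subset_closure h0C)
    simpa using this
  have hfle : ∀ w ∈ closure (coneHull U), f w ≤ 0 := by
    intro w hw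
    by_contra hpos
    push_neg at hpos
    have ht : (0 : ℝ) ≤ u / f w := le_of_lt (div_pos hupos hpos)
    have h1 := hfu _ (hCb_smul _ ht w hw)
    rw [map_smul, smul_eq_mul, div_mul_cancel₀ _ (ne_of_gt hpos)] at h1
    exact lt_irrefl u h1
  have hfA : ∀ p ∈ A, f p ≤ 0 := fun p hp =>
    hfle p (subset_closure (mem_coneHull_of_mem (subset_convexHull ℝ _ (Or.inl hp))))
  -- Step 3: decompose f
  set g : Y →L[ℝ] ℝ := f.comp (ContinuousLinearMap.inl ℝ Y ℝ) with hg
  set α : ℝ := f ((0 : Y), (1 : ℝ)) with hαdef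
  have hsplit : ∀ (y : Y) (r : ℝ), f (y, r) = g y + r * α := by
    intro y r
    have h1 : ((y, r) : Y × ℝ) = ((y, (0 : ℝ)) : Y × ℝ) + (((0 : Y), r) : Y × ℝ) := by
      simp [Prod.ext_iff]
    rw [h1, map_add]
    congr 1
    have h2 : (((0 : Y), r) : Y × ℝ) = r • (((0 : Y), (1 : ℝ)) : Y × ℝ) := by
      simp [Prod.smul_mk]
    rw [h2, map_smul, smul_eq_mul]
  have hmemA : ∀ p : X × Y, Φ p ≠ ⊤ → ((p.2, (Φ p).toReal - v) : Y × ℝ) ∈ A := by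
    intro p hp
    refine ⟨p.1, ?_⟩
    rw [sub_add_cancel]
    exact le_of_eq (EReal.coe_toReal hp (hbot _)).symm
  -- Step 4: α ≤ 0
  obtain ⟨p₀, hp0⟩ := hdom
  have hαle : α ≤ 0 := by
    by_contra hcg
    push_neg at hcg
    have hmem : ∀ r : ℝ, (Φ p₀).toReal - v ≤ r → ((p₀.2, r) : Y × ℝ) ∈ A := by
      intro r hr
      refine ⟨p₀.1, ?_⟩
      have heq : Φ (p₀.1, p₀.2) = (((Φ p₀).toReal : ℝ) : EReal) :=
        (EReal.coe_toReal hp0 (hbot _)).symm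
      rw [heq, EReal.coe_le_coe_iff]
      linarith
    have h1 := hfA _ (hmem (max ((Φ p₀).toReal - v) ((1 - g p₀.2) / α)) (le_max_left _ _))
    rw [hsplit] at h1
    have h2 : (1 - g p₀.2) / α * α ≤ max ((Φ p₀).toReal - v) ((1 - g p₀.2) / α) * α :=
      mul_le_mul_of_nonneg_right (le_max_right _ _) hcg.le
    rw [div_mul_cancel₀ _ (ne_of_gt hcg)] at h2
    linarith
  -- Step 5: α < 0  (uses the qi hypothesis)
  have hαlt : α < 0 := by
    rcases lt_or_eq_of_le hαle with h | h
    · exact h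
    exfalso
    have hg0 : ∀ y ∈ {y : Y | ∃ x : X, Φ (x, y) ≠ ⊤}, g y ≤ 0 := by
      rintro y ⟨x, hx⟩
      have h1 := hfA _ (hmemA (x, y) hx)
      rw [hsplit, h, mul_zero, add_zero] at h1
      exact h1
    obtain ⟨hD0, hDclos⟩ := hqi
    have hDsub : {y : Y | ∃ x : X, Φ (x, y) ≠ ⊤} - {(0 : Y)} = {y : Y | ∃ x : X, Φ (x, y) ≠ ⊤} := by
      simp [Set.sub_singleton]
    rw [hDsub] at hDclos
    have hcone : ∀ w ∈ coneHull {y : Y | ∃ x : X, Φ (x, y) ≠ ⊤}, g w ≤ 0 := by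
      rintro w ⟨t, ht, s, hs, rfl⟩
      rw [map_smul, smul_eq_mul]
      have := mul_le_mul_of_nonneg_left (hg0 s hs) ht
      simpa using this
    have hall : ∀ y : Y, g y ≤ 0 := by
      intro y
      have hsubset : closure (coneHull {y : Y | ∃ x : X, Φ (x, y) ≠ ⊤}) ⊆ {y : Y | g y ≤ 0} :=
        closure_minimal hcone (isClosed_le g.continuous continuous_const)
      rw [hDclos] at hsubset
      exact hsubset (mem_univ y)
    have hzero : f (-z) ≤ 0 := by
      have h1 : f (-z) = g (-z).1 + (-z).2 * α := hsplit (-z).1 (-z).2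
      rw [h1, h, mul_zero, add_zero]
      exact hall _
    linarith
  -- Step 6: the dual optimal point
  set ystar : Y →L[ℝ] ℝ := (-α)⁻¹ • g with hystar
  have hkey : ∀ p : X × Y, ((ystar p.2 : ℝ) : EReal) - Φ p ≤ ((-v : ℝ) : EReal) := by
    intro p
    rcases eq_or_ne (Φ p) ⊤ with htop | htop
    · rw [htop, EReal.sub_top]
      exact bot_le
    · have hΦ : Φ p = (((Φ p).toReal : ℝ) : EReal) := (EReal.coe_toReal htop (hbot _)).symm
      have h1 := hfA _ (hmemA p htop)
      rw [hsplit] at h1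
      have hpos : 0 < -α := neg_pos.mpr hαlt
      have h2 : ystar p.2 ≤ (Φ p).toReal - v := by
        have h3 : g p.2 ≤ ((Φ p).toReal - v) * (-α) := by
          have hr : ((Φ p).toReal - v) * (-α) = -(((Φ p).toReal - v) * α) := by ring
          linarith [hr]
        have h4 : ystar p.2 = (-α)⁻¹ * g p.2 := by
          simp [hystar, smul_eq_mul]
        rw [h4]
        calc (-α)⁻¹ * g p.2 ≤ (-α)⁻¹ * (((Φ p).toReal - v) * (-α)) :=
              mul_le_mul_of_nonneg_left h3 (inv_nonneg.mpr hpos.le)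
          _ = (Φ p).toReal - v := by
              rw [mul_comm ((Φ p).toReal - v) (-α), ← mul_assoc,
                inv_mul_cancel₀ (ne_of_gt hpos), one_mul]
      rw [hΦ, ← EReal.coe_sub]
      exact EReal.coe_le_coe_iff.mpr (by linarith)
  have hsup_le : (⨆ p : X × Y, ((ystar p.2 : ℝ) : EReal) - Φ p) ≤ ((-v : ℝ) : EReal) :=
    iSup_le hkey
  have hge : ∀ zstar : Y →L[ℝ] ℝ,
      ((-v : ℝ) : EReal) ≤ ⨆ p : X × Y, ((zstar p.2 : ℝ) : EReal) - Φ p := by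
    intro zs
    have h2 : (⨆ x : X, -Φ (x, 0)) ≤ ⨆ p : X × Y, ((zs p.2 : ℝ) : EReal) - Φ p := by
      refine iSup_le fun x => ?_
      have h3 := le_iSup (fun p : X × Y => ((zs p.2 : ℝ) : EReal) - Φ p) (x, (0 : Y))
      simpa [sub_eq_add_neg] using h3
    calc ((-v : ℝ) : EReal) = -(⨅ x : X, Φ (x, 0)) := by rw [hv]; exact EReal.coe_neg v
      _ = ⨆ x : X, -Φ (x, 0) := ereal_neg_iInf _
      _ ≤ _ := h2
  refine ⟨ystar, ?_, ?_⟩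
  · rw [le_antisymm hsup_le (hge ystar), ← EReal.coe_neg, neg_neg]
  · intro zs
    rw [EReal.neg_le, ← EReal.coe_neg]
    exact hge zs
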